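/- Let H = (B_1, B_2, B_3, B_4, B_5) be a nice blowup of C_5 in a graph G with no induced P_7, C_4, or C_6. Then for each i ∈ {1,...,5}, the vertices of B_i can be linearly ordered b_i^1, ..., b_i^{|B_i|} so that their neighborhoods in B_{i-1} ∪ B_{i+1} form an increasing chain: N(b_i^1) ∩ (B_{i-1} ∪ B_{i+1}) ⊆ N(b_i^2) ∩ (B_{i-1} ∪ B_{i+1}) ⊆ ... In particular B_i contains a vertex complete to B_{i-1} ∪ B_{i+1}. -/

import Mathlib

open SimpleGraph

lemma c4emb {V : Type*} (G : SimpleGraph V) {a b c d : V}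
    (hab : G.Adj a b) (hbc : G.Adj b c) (hcd : G.Adj c d) (hda : G.Adj d a)
    (hac : ¬ G.Adj a c) (hbd : ¬ G.Adj b d) (hac' : a ≠ c) (hbd' : b ≠ d) :
    Nonempty (cycleGraph 4 ↪g G) := by
  have hinj : Function.Injective ![a, b, c, d] := by
    intro u v huv
    fin_cases u <;> fin_cases v <;>
      simp_all [hab.ne, hbc.ne, hcd.ne, hda.ne, hab.ne', hbc.ne', hcd.ne', hda.ne',
        hac', hbd', hac'.symm, hbd'.symm]
  have hca : ¬ G.Adj c a := fun h => hac h.symm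
  have hdb : ¬ G.Adj d b := fun h => hbd h.symm
  refine ⟨⟨⟨![a, b, c, d], hinj⟩, ?_⟩⟩
  intro u v
  fin_cases u <;> fin_cases v <;>
    simp [cycleGraph_adj, hab, hbc, hcd, hda, hac, hbd, hca, hdb,
      hab.symm, hbc.symm, hcd.symm, hda.symm] <;> decide

theorem stmt_16 {V : Type*} [Fintype V] (G : SimpleGraph V)
    (hP7 : IsEmpty (pathGraph 7 ↪g G))
    (hC4 : IsEmpty (cycleGraph 4 ↪g G))
    (hC6 : IsEmpty (cycleGraph 6 ↪g G))
    -- `(B 0, …, B 4)` is a nice blowup of `C₅` (indices mod 5):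
    (B : Fin 5 → Set V)
    (hdisj : ∀ i j : Fin 5, i ≠ j → Disjoint (B i) (B j))
    (hclique : ∀ i, G.IsClique (B i))
    (hne : ∀ i, (B i).Nonempty)
    (hnbr : ∀ i : Fin 5, ∀ v ∈ B i,
      (∃ x ∈ B (i - 1), G.Adj v x) ∧ ∃ x ∈ B (i + 1), G.Adj v x)
    (hanti : ∀ i : Fin 5, ∀ x ∈ B i, ∀ y ∈ B (i + 2), ¬ G.Adj x y)
    (hP4 : ∀ i : Fin 5, ∀ a ∈ B i, ∀ b ∈ B (i + 1), ∀ c ∈ B (i + 1), ∀ d ∈ B (i + 2),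
      b ≠ c → G.Adj a b → G.Adj b c → G.Adj c d →
      ¬ G.Adj a c → ¬ G.Adj b d → ¬ G.Adj a d → False) :
    ∀ i : Fin 5,
      -- the neighborhoods in `B (i-1) ∪ B (i+1)` of vertices of `B i` form a chain
      (∀ x ∈ B i, ∀ y ∈ B i,
        (B (i - 1) ∪ B (i + 1)) ∩ G.neighborSet x ⊆
          (B (i - 1) ∪ B (i + 1)) ∩ G.neighborSet y ∨
        (B (i - 1) ∪ B (i + 1)) ∩ G.neighborSet y ⊆
          (B (i - 1) ∪ B (i + 1)) ∩ G.neighborSet x) ∧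
      -- in particular `B i` contains a vertex complete to `B (i-1) ∪ B (i+1)`
      ∃ x ∈ B i, ∀ y ∈ B (i - 1) ∪ B (i + 1), G.Adj x y := by
  classical
  intro i
  have e1 : i - 1 + 1 = i := by fin_cases i <;> decide
  have e2 : i - 1 + 2 = i + 1 := by fin_cases i <;> decide
  have e3 : i + 1 - 1 = i := by fin_cases i <;> decide
  have ne1 : i ≠ i - 1 := fun h => absurd (sub_eq_self.mp h.symm) (by decide)
  have ne2 : i ≠ i + 1 := fun h => absurd (left_eq_add.mp h) (by decide)
  set S : V → Set V := fun x => (B (i - 1) ∪ B (i + 1)) ∩ G.neighborSet x with hS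
  have key : ∀ x ∈ B i, ∀ y ∈ B i, S x ⊆ S y ∨ S y ⊆ S x := by
    intro x hx y hy
    by_contra h
    push_neg at h
    obtain ⟨h1, h2⟩ := h
    obtain ⟨u, hu, huy⟩ := Set.not_subset.mp h1
    obtain ⟨v, hv, hvx⟩ := Set.not_subset.mp h2
    obtain ⟨huB, hxu⟩ := hu
    obtain ⟨hvB, hyv⟩ := hv
    have hyu : ¬ G.Adj y u := fun hadj => huy ⟨huB, hadj⟩
    have hxv : ¬ G.Adj x v := fun hadj => hvx ⟨hvB, hadj⟩
    have hxu : G.Adj x u := hxu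
    have hyv : G.Adj y v := hyv
    have hxy' : x ≠ y := by rintro rfl; exact hyu hxu
    have hxy : G.Adj x y := hclique i hx hy hxy'
    -- u ≠ v
    have huv' : u ≠ v := by rintro rfl; exact hxv hxu
    rcases huB with huB | huB <;> rcases hvB with hvB | hvB
    · -- both in B (i-1): C4 x-u-v-y
      have huvadj : G.Adj u v := hclique (i - 1) huB hvB huv'
      have hxv' : x ≠ v := fun h => (hdisj i (i - 1) ne1).ne_of_mem hx (h ▸ hvB) rfl
      have huy' : u ≠ y := fun h => (hdisj (i - 1) i ne1.symm).ne_of_mem huB (h ▸ hy) rfl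
      exact hC4.false (c4emb G hxu huvadj hyv.symm hxy.symm hxv (fun h => hyu h.symm) hxv' huy').some
    · -- u ∈ B (i-1), v ∈ B (i+1): P4  u-x-y-v
      exact hP4 (i - 1) u huB x (by rw [e1]; exact hx) y (by rw [e1]; exact hy)
        v (by rw [e2]; exact hvB) hxy' hxu.symm hxy hyv
        (fun h => hyu h.symm) hxv (hanti (i - 1) u huB v (by rw [e2]; exact hvB))
    · -- u ∈ B (i+1), v ∈ B (i-1): P4  v-y-x-u
      exact hP4 (i - 1) v hvB y (by rw [e1]; exact hy) x (by rw [e1]; exact hx)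
        u (by rw [e2]; exact huB) hxy'.symm hyv.symm hxy.symm hxu
        (fun h => hxv h.symm) hyu (hanti (i - 1) v hvB u (by rw [e2]; exact huB))
    · -- both in B (i+1): C4
      have huvadj : G.Adj u v := hclique (i + 1) huB hvB huv'
      have hxv' : x ≠ v := fun h => (hdisj i (i + 1) ne2).ne_of_mem hx (h ▸ hvB) rfl
      have huy' : u ≠ y := fun h => (hdisj (i + 1) i ne2.symm).ne_of_mem huB (h ▸ hy) rfl
      exact hC4.false (c4emb G hxu huvadj hyv.symm hxy.symm hxv (fun h => hyu h.symm) hxv' huy').some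
  refine ⟨key, ?_⟩
  obtain ⟨x, hx, hmax⟩ := Set.Finite.exists_maximalFor S (B i) (Set.toFinite _) (hne i)
  have hall : ∀ y ∈ B i, S y ⊆ S x := by
    intro y hy
    rcases key x hx y hy with h | h
    · exact hmax hy h
    · exact h
  refine ⟨x, hx, ?_⟩
  intro u hu
  rcases hu with hu | hu
  · obtain ⟨y, hy, hadj⟩ := ((hnbr (i - 1) u hu).2)
    rw [e1] at hy
    have : u ∈ S y := ⟨Or.inl hu, hadj.symm⟩
    exact (hall y hy this).2
  · obtain ⟨y, hy, hadj⟩ := ((hnbr (i + 1) u hu).1)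
    rw [e3] at hy
    have : u ∈ S y := ⟨Or.inr hu, hadj.symm⟩
    exact (hall y hy this).2
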